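/- arXiv:2601.01445 — 4 statements merged into one kernel-verified Lean document; each statement's English description precedes it below -/
import Mathlib

section
/- The pair (E, p) is logically contextual if and only if there exists a set e ∈ E with p e > 0 such that for every λ ∈ e there exists a set f ∈ E with λ ∈ f and p f = 0. -/
/-- The probability that a distribution `q` on the finite set `Λ` of deterministic states
assigns to a subset `S ⊆ Λ`: `q(S) = ∑_{l ∈ S} q l`. -/
noncomputable def setSum {Λ : Type*} [Fintype Λ] (q : Λ → ℝ) (S : Set Λ) : ℝ :=
  ∑ l, S.indicator q l

/-- `(E, p)` is logically contextual if there is no probability distribution `q` on `Λ`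
such that for every `e ∈ E`, `q(e) > 0` iff `p e > 0`. -/
def IsLogicallyContextual {Λ : Type*} [Fintype Λ] (E : Set (Set Λ)) (p : Set Λ → ℝ) : Prop :=
  ¬ ∃ q : Λ → ℝ, (∀ l, 0 ≤ q l) ∧ (∑ l, q l) = 1 ∧
      ∀ e ∈ E, (0 < setSum q e ↔ 0 < p e)

/-- `(E, p)` witnesses a logical Hardy-type paradox if there exist finitely many sets
`e₁, …, eₙ ∈ E` (`n ≥ 1`) with `e₁ ∩ ⋯ ∩ eₙ = ∅` and an index `k` such that
`p eₖ > 0` and `p eᵢ = 1` for all `i ≠ k`. -/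
def WitnessesLogicalHardy {Λ : Type*} (E : Set (Set Λ)) (p : Set Λ → ℝ) : Prop :=
  ∃ n : ℕ, 1 ≤ n ∧ ∃ e : Fin n → Set Λ,
    (∀ i, e i ∈ E) ∧ (⋂ i, e i) = ∅ ∧
    ∃ k : Fin n, 0 < p (e k) ∧ ∀ i ≠ k, p (e i) = 1

/-- `(E, p)` is strongly contextual if for every deterministic state `l ∈ Λ` there exists
`e ∈ E` with `l ∈ e` and `p e = 0`. -/
def IsStronglyContextual {Λ : Type*} (E : Set (Set Λ)) (p : Set Λ → ℝ) : Prop :=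
  ∀ l : Λ, ∃ e ∈ E, l ∈ e ∧ p e = 0

open Classical in
lemma setSum_pos_iff {Λ : Type*} [Fintype Λ] (q : Λ → ℝ) (hq : ∀ l, 0 ≤ q l)
    (S : Set Λ) : 0 < setSum q S ↔ ∃ l ∈ S, 0 < q l := by
  unfold setSum
  constructor
  · intro h
    by_contra hc
    push_neg at hc
    have : ∀ l, S.indicator q l = 0 := by
      intro l
      by_cases hl : l ∈ S
      · simp [Set.indicator_of_mem hl, le_antisymm (hc l hl) (hq l)]
      · simp [Set.indicator_of_notMem hl]
    simp [this] at h
  · rintro ⟨l, hl, hql⟩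
    apply Finset.sum_pos' (fun i _ => Set.indicator_nonneg (fun x _ => hq x) i)
    exact ⟨l, Finset.mem_univ l, by simpa [Set.indicator_of_mem hl] using hql⟩

/-- A general system `(E, p)` is logically contextual iff there exists an event
`e ∈ E` with `p e > 0` such that every deterministic state `l ∈ e` lies in some
event `f ∈ E` with `p f = 0`. -/
theorem logicallyContextual_iff {Λ : Type*} [Fintype Λ] [Nonempty Λ]
    (E : Set (Set Λ)) (hE : E.Nonempty) (hcompl : ∀ e ∈ E, eᶜ ∈ E)
    (p : Set Λ → ℝ) (hp0 : ∀ e ∈ E, 0 ≤ p e) (hp1 : ∀ e ∈ E, p e ≤ 1)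
    (hpc : ∀ e ∈ E, p eᶜ = 1 - p e) :
    IsLogicallyContextual E p ↔
      ∃ e ∈ E, 0 < p e ∧ ∀ l ∈ e, ∃ f ∈ E, l ∈ f ∧ p f = 0 := by
  classical
  constructor
  · -- contrapositive: no such e → a distribution exists
    intro hLC
    by_contra hno
    push_neg at hno
    -- good states
    set G : Set Λ := {l | ∀ f ∈ E, l ∈ f → 0 < p f} with hG
    have hmeet : ∀ e ∈ E, 0 < p e → ∃ l ∈ e, l ∈ G := by
      intro e he hpe
      obtain ⟨l, hl, hl2⟩ := hno e he hpe
      refine ⟨l, hl, fun f hf hlf => ?_⟩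
      exact lt_of_le_of_ne (hp0 f hf) (Ne.symm (hl2 f hf hlf))
    -- G is nonempty
    have hGne : G.Nonempty := by
      obtain ⟨e, he⟩ := hE
      rcases lt_or_eq_of_le (hp0 e he) with h | h
      · obtain ⟨l, _, hl⟩ := hmeet e he h
        exact ⟨l, hl⟩
      · have : 0 < p eᶜ := by rw [hpc e he, ← h]; norm_num
        obtain ⟨l, _, hl⟩ := hmeet eᶜ (hcompl e he) this
        exact ⟨l, hl⟩
    set n : ℕ := G.toFinset.card with hn
    have hnpos : 0 < n := Finset.card_pos.2 (by
      obtain ⟨l, hl⟩ := hGne; exact ⟨l, Set.mem_toFinset.2 hl⟩)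
    set q : Λ → ℝ := G.indicator (fun _ => (n : ℝ)⁻¹) with hq
    have hqnn : ∀ l, 0 ≤ q l := fun l =>
      Set.indicator_nonneg (fun _ _ => by positivity) l
    have hsum : (∑ l, q l) = 1 := by
      rw [hq]
      rw [Finset.sum_indicator_eq_sum_filter]
      rw [Finset.sum_const]
      have : Finset.filter (fun i => i ∈ G) Finset.univ = G.toFinset := by
        ext l; simp
      rw [this, ← hn, nsmul_eq_mul]
      field_simp
    apply hLC
    refine ⟨q, hqnn, hsum, fun e he => ?_⟩
    rw [setSum_pos_iff q hqnn]
    constructor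
    · rintro ⟨l, hl, hql⟩
      have hlG : l ∈ G := by
        by_contra h
        rw [hq, Set.indicator_of_notMem h] at hql
        exact lt_irrefl _ hql
      exact hlG e he hl
    · intro hpe
      obtain ⟨l, hl, hlG⟩ := hmeet e he hpe
      refine ⟨l, hl, ?_⟩
      rw [hq, Set.indicator_of_mem hlG]
      positivity
  · rintro ⟨e, he, hpe, hcov⟩ ⟨q, hqnn, hsum, hiff⟩
    have : 0 < setSum q e := (hiff e he).2 hpe
    obtain ⟨l, hl, hql⟩ := (setSum_pos_iff q hqnn e).1 this
    obtain ⟨f, hf, hlf, hpf⟩ := hcov l hl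
    have : 0 < setSum q f := (setSum_pos_iff q hqnn f).2 ⟨l, hlf, hql⟩
    have := (hiff f hf).1 this
    rw [hpf] at this
    exact lt_irrefl _ this
end

section
/- The pair (E, p) is strongly contextual if and only if (E, p) witnesses a logical Hardy-type paradox with success probability 1, i.e., there exist finitely many sets e₁, …, eₙ ∈ E (n ≥ 1) with e₁ ∩ ⋯ ∩ eₙ = ∅ and p eᵢ = 1 for all i. -/
/-- A general system `(E, p)` is strongly contextual iff it witnesses a logical
Hardy-type paradox with success probability `1`: there exist finitely many sets
`e₁, …, eₙ ∈ E` (`n ≥ 1`) with `e₁ ∩ ⋯ ∩ eₙ = ∅` and `p eᵢ = 1` for all `i`. -/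
theorem stronglyContextual_iff_hardy_sp_one {Λ : Type*} [Fintype Λ] [Nonempty Λ]
    (E : Set (Set Λ)) (hE : E.Nonempty) (hcompl : ∀ e ∈ E, eᶜ ∈ E)
    (p : Set Λ → ℝ) (hp0 : ∀ e ∈ E, 0 ≤ p e) (hp1 : ∀ e ∈ E, p e ≤ 1)
    (hpc : ∀ e ∈ E, p eᶜ = 1 - p e) :
    IsStronglyContextual E p ↔
      ∃ n : ℕ, 1 ≤ n ∧ ∃ e : Fin n → Set Λ,
        (∀ i, e i ∈ E) ∧ (⋂ i, e i) = ∅ ∧ ∀ i, p (e i) = 1 := by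
  constructor
  · intro hsc
    choose f hfE hfl hfp using hsc
    refine ⟨Fintype.card Λ, Fintype.card_pos, fun i => (f ((Fintype.equivFin Λ).symm i))ᶜ,
      fun i => hcompl _ (hfE _), ?_, fun i => by
        rw [hpc _ (hfE _), hfp]; ring⟩
    ext l
    simp only [Set.mem_iInter, Set.mem_compl_iff, Set.mem_empty_iff_false, iff_false, not_forall,
      not_not]
    exact ⟨Fintype.equivFin Λ l, by simpa using hfl l⟩
  · rintro ⟨n, hn, e, heE, hint, hp1'⟩ l
    have : l ∉ ⋂ i, e i := by simp [hint]
    obtain ⟨k, hk⟩ : ∃ k, l ∉ e k := by simpa using this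
    exact ⟨(e k)ᶜ, hcompl _ (heE k), hk, by rw [hpc _ (heE k), hp1']; ring⟩
end

section
/- If the pair (E, p) witnesses a logical Hardy-type paradox, then there is no probability distribution q on Λ such that q(e) = p e for every e ∈ E; that is, the state p admits no classical (noncontextual) probabilistic model. -/
/-- If `(E, p)` witnesses a logical Hardy-type paradox, then the state `p` admits no
classical (noncontextual) probabilistic model: there is no probability distribution
`q` on `Λ` with `q(e) = p e` for every `e ∈ E`. -/
theorem witnessesLogicalHardy_no_classical_model {Λ : Type*} [Fintype Λ] [Nonempty Λ]
    (E : Set (Set Λ)) (hE : E.Nonempty) (hcompl : ∀ e ∈ E, eᶜ ∈ E)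
    (p : Set Λ → ℝ) (hp0 : ∀ e ∈ E, 0 ≤ p e) (hp1 : ∀ e ∈ E, p e ≤ 1)
    (hpc : ∀ e ∈ E, p eᶜ = 1 - p e)
    (hH : WitnessesLogicalHardy E p) :
    ¬ ∃ q : Λ → ℝ, (∀ l, 0 ≤ q l) ∧ (∑ l, q l) = 1 ∧ ∀ e ∈ E, setSum q e = p e := by
  rintro ⟨q, hq0, hq1, hqe⟩
  obtain ⟨n, hn, e, heE, hint, k, hpk, hpi⟩ := hH
  -- find λ with q λ > 0 in e k
  have hsum : setSum q (e k) = p (e k) := hqe _ (heE k)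
  have hpos : 0 < ∑ l, (e k).indicator q l := by
    rw [← setSum]; rw [hsum]; exact hpk
  obtain ⟨l, -, hl⟩ := Finset.exists_lt_of_sum_lt
    (show ∑ x : Λ, (0:ℝ) < ∑ x, (e k).indicator q x by simpa using hpos)
  have hlek : l ∈ e k := by
    by_contra h
    rw [Set.indicator_of_notMem h] at hl
    exact absurd hl (lt_irrefl 0)
  have hql : 0 < q l := by rwa [Set.indicator_of_mem hlek] at hl
  have hmem : ∀ i, l ∈ e i := by
    intro i
    by_cases hik : i = k
    · rwa [hik]
    · -- setSum q (e i) = 1, so complement sums to 0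
      have h1 : setSum q (e i) = 1 := by rw [hqe _ (heE i)]; exact hpi i hik
      have hsplit : setSum q (e i) + setSum q (e i)ᶜ = 1 := by
        rw [← hq1]
        unfold setSum
        rw [← Finset.sum_add_distrib]
        congr 1; funext x
        by_cases hx : x ∈ e i
        · rw [Set.indicator_of_mem hx, Set.indicator_of_notMem (by simpa using hx), add_zero]
        · rw [Set.indicator_of_notMem hx, Set.indicator_of_mem (by simpa using hx), zero_add]
      have hc0 : setSum q (e i)ᶜ = 0 := by linarith
      have : ∀ x ∈ Finset.univ, (0:ℝ) ≤ (e i)ᶜ.indicator q x := fun x _ =>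
        Set.indicator_nonneg (fun y _ => hq0 y) x
      have hall := (Finset.sum_eq_zero_iff_of_nonneg this).mp hc0
      by_contra hli
      have := hall l (Finset.mem_univ l)
      rw [Set.indicator_of_mem (by simpa using hli)] at this
      exact absurd this (ne_of_gt hql)
  have : l ∈ (⋂ i, e i) := Set.mem_iInter.mpr hmem
  rw [hint] at this
  exact this
end

section
/- There exists a probability distribution q on Λ such that for every v ∈ V one has (∃ λ ∈ m v with q λ > 0) if and only if b v, precisely when there exists a nonempty subset S ⊆ Λ such that for every v ∈ V one has S ∩ m v ≠ ∅ if and only if b v. (This is the content of the incidence-matrix criterion: the Boolean linear system M x = b̄ over the two-element Boolean algebra has a solution x if and only if the possibilistic collapse b extends to a global probabilistic model; hence the system is logically contextual if and only if the Boolean system has no solution.) -/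
/-- The incidence-matrix criterion: the possibilistic collapse `b` extends to a global
probabilistic model (a probability distribution `q` on the deterministic states `Λ`
with `q(m v) > 0` iff `b v` for every atom `v`) precisely when the Boolean linear
system `M x = b̄` over the two-element Boolean algebra has a solution, i.e. there is a
nonempty subset `S ⊆ Λ` with `S ∩ m v ≠ ∅` iff `b v` for every atom `v`. -/
theorem prob_model_iff_boolean_solution {Λ V : Type*} [Fintype Λ] [Fintype V]
    (m : V → Set Λ) (b : V → Prop) :
    (∃ q : Λ → ℝ, (∀ l, 0 ≤ q l) ∧ (∑ l, q l) = 1 ∧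
        ∀ v, (∃ l ∈ m v, 0 < q l) ↔ b v) ↔
    (∃ S : Set Λ, S.Nonempty ∧ ∀ v, (S ∩ m v).Nonempty ↔ b v) := by
  classical
  constructor
  · rintro ⟨q, hq0, hq1, hq⟩
    refine ⟨{l | 0 < q l}, ?_, ?_⟩
    · by_contra h
      rw [Set.not_nonempty_iff_eq_empty] at h
      have : ∀ l, q l = 0 := by
        intro l
        have : ¬ 0 < q l := fun hl => (Set.eq_empty_iff_forall_notMem.mp h l) hl
        linarith [hq0 l]
      simp [this] at hq1
    · intro v
      rw [← hq v]
      constructor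
      · rintro ⟨l, hl, hlm⟩; exact ⟨l, hlm, hl⟩
      · rintro ⟨l, hlm, hl⟩; exact ⟨l, hl, hlm⟩
  · rintro ⟨S, hSne, hS⟩
    set T := hSne.to_subtype
    have hfin : S.Finite := Set.toFinite S
    set F := hfin.toFinset with hF
    have hFne : F.Nonempty := by
      rw [hF, Set.Finite.toFinset_nonempty]; exact hSne
    have hcard : 0 < (F.card : ℝ) := by
      exact_mod_cast Finset.card_pos.mpr hFne
    refine ⟨fun l => if l ∈ S then 1 / F.card else 0, ?_, ?_, ?_⟩
    · intro l; positivity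
    · have hmem : ∀ l, (l ∈ S) = (l ∈ F) := fun l => by simp [hF, Set.Finite.mem_toFinset]
      simp only [hmem]
      rw [Finset.sum_ite_mem, Finset.univ_inter, Finset.sum_const, nsmul_eq_mul]
      field_simp
    · intro v
      rw [← hS v]
      constructor
      · rintro ⟨l, hlm, hl⟩
        by_cases hls : l ∈ S
        · exact ⟨l, hls, hlm⟩
        · simp [hls] at hl
      · rintro ⟨l, hls, hlm⟩
        refine ⟨l, hlm, ?_⟩
        simp only [hls, if_true]
        positivity
end
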